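/- arXiv:1702.00976 — 2 statements merged into one kernel-verified Lean document; each statement's English description precedes it below -/
import Mathlib

section
/- Let α ∈ (0,1) and λ ∈ ℝ. Then for all t ∈ (a,b], the left ψ-Caputo derivative of the function t ↦ E_α(λ(ψ(t) − ψ(a))^α) satisfies ^CD_{a+}^{α,ψ}[E_α(λ(ψ(·) − ψ(a))^α)](t) = λ · E_α(λ(ψ(t) − ψ(a))^α). -/
open Real Set

/-- The left ψ-Caputo fractional derivative of order `α ∈ (0,1)`. -/
noncomputable def psiCaputoLeft (a α : ℝ) (ψ x : ℝ → ℝ) (t : ℝ) : ℝ :=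
  (1 / Real.Gamma (1 - α)) * ∫ τ in a..t, (ψ t - ψ τ) ^ (-α) * deriv x τ

/-- The (real) Mittag-Leffler function `E_α(z) = Σ_{k=0}^∞ z^k / Γ(αk+1)`. -/
noncomputable def mittagLeffler (α z : ℝ) : ℝ :=
  ∑' k : ℕ, z ^ k / Real.Gamma (α * k + 1)

open MeasureTheory Filter Metric intervalIntegral

lemma gamma_ineq (α x : ℝ) (hα : 0 < α) (hα1 : α < 1) (hx : 0 < x) :
    Real.Gamma (x + 1) ≤ Real.Gamma (x + α) * (x + α) ^ (1 - α) := by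
  have hxα : (0:ℝ) < x + α := by linarith
  have hxα1 : (0:ℝ) < x + α + 1 := by linarith
  have hc := Real.convexOn_log_Gamma.2 (mem_Ioi.mpr hxα) (mem_Ioi.mpr hxα1)
    (le_of_lt hα) (by linarith : (0:ℝ) ≤ 1 - α) (by ring)
  have hcomb : α • (x + α) + (1 - α) • (x + α + 1) = x + 1 := by
    simp [smul_eq_mul]; ring
  rw [hcomb] at hc
  simp only [Function.comp, smul_eq_mul] at hc
  have hG1 : 0 < Real.Gamma (x + 1) := Real.Gamma_pos_of_pos (by linarith)
  have hG2 : 0 < Real.Gamma (x + α) := Real.Gamma_pos_of_pos hxα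
  have hG3 : Real.Gamma (x + α + 1) = (x + α) * Real.Gamma (x + α) := Real.Gamma_add_one (ne_of_gt hxα)
  rw [hG3, Real.log_mul (ne_of_gt hxα) (ne_of_gt hG2)] at hc
  have : Real.log (Real.Gamma (x+1)) ≤ Real.log (Real.Gamma (x+α)) + (1-α) * Real.log (x+α) := by
    nlinarith
  calc Real.Gamma (x+1) = Real.exp (Real.log (Real.Gamma (x+1))) := (Real.exp_log hG1).symm
    _ ≤ Real.exp (Real.log (Real.Gamma (x+α)) + (1-α) * Real.log (x+α)) := Real.exp_le_exp.mpr this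
    _ = Real.Gamma (x+α) * (x+α) ^ (1-α) := by
        rw [Real.exp_add, Real.exp_log hG2, Real.rpow_def_of_pos hxα, mul_comm (1-α)]

lemma summable_gamma (α r : ℝ) (hα : 0 < α) (hα1 : α < 1) (hr : 0 ≤ r) :
    Summable (fun k : ℕ => ((k:ℝ) + 1) * r ^ k / Real.Gamma (α * k + 1)) := by
  apply summable_of_ratio_norm_eventually_le (r := 1/2) (by norm_num)
  have h1 : Tendsto (fun k : ℕ => (α * k + 1) ^ α) atTop atTop := by
    apply (tendsto_rpow_atTop hα).comp
    exact tendsto_atTop_add_const_right _ 1 (tendsto_natCast_atTop_atTop.const_mul_atTop hα)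
  filter_upwards [h1.eventually_ge_atTop (8 * r)] with k hk
  rcases hr.eq_or_lt with hr0 | hr'
  · rw [← hr0]
    simp only [pow_succ, mul_zero, zero_div, mul_zero, zero_mul, norm_zero]
    positivity
  set y : ℝ := α * k + 1 with hy_def
  have hy : (0:ℝ) < y := by positivity
  set G := Real.Gamma y with hG_def
  set G' := Real.Gamma (α * ((k:ℕ)+1:ℕ) + 1) with hG'_def
  have hΓk : 0 < G := Real.Gamma_pos_of_pos hy
  have hΓk1 : 0 < G' := Real.Gamma_pos_of_pos (by positivity)
  set P := (y + α) ^ (1 - α) with hP_def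
  have hPpos : 0 < P := rpow_pos_of_pos (by positivity) _
  have hrw : α * ((k:ℕ)+1:ℕ) + 1 = y + α := by push_cast [hy_def]; ring
  have h₁ : y * G ≤ G' * P := by
    have key := gamma_ineq α y hα hα1 hy
    rw [Real.Gamma_add_one (ne_of_gt hy)] at key
    rw [hG'_def, hrw]; exact key
  have hb2 : P ≤ y / (4 * r) := by
    have h2x : y + α ≤ 2 * y := by simp only [hy_def]; nlinarith [Nat.cast_nonneg (α := ℝ) k]
    have hs1 : P ≤ (2 * y) ^ (1 - α) :=
      Real.rpow_le_rpow (by positivity) h2x (by linarith)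
    have hs2 : (2 * y) ^ (1 - α) = (2 * y) / (2 * y) ^ α := by
      rw [eq_div_iff (by positivity), ← Real.rpow_add (by positivity : (0:ℝ) < 2*y)]
      norm_num
    have hs3 : (2 * y) / (2 * y) ^ α ≤ (2 * y) / y ^ α := by
      apply div_le_div_of_nonneg_left (by positivity) (by positivity)
      exact Real.rpow_le_rpow hy.le (by linarith) hα.le
    have hs4 : (2 * y) / y ^ α ≤ (2 * y) / (8 * r) := by
      apply div_le_div_of_nonneg_left (by positivity) (by positivity) hk
    calc P ≤ (2*y)^(1-α) := hs1
      _ = (2*y)/(2*y)^α := hs2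
      _ ≤ (2*y)/y^α := hs3
      _ ≤ (2*y)/(8*r) := hs4
      _ = y/(4*r) := by ring
  have hGle : G ≤ G' * P / y := (le_div_iff₀ hy).mpr (by linarith [h₁])
  -- remove norms
  rw [Real.norm_of_nonneg (by positivity), Real.norm_of_nonneg (by positivity),
    mul_div_assoc', div_le_div_iff₀ hΓk1 hΓk]
  push_cast
  have main : ((k:ℝ)+1+1) * r^(k+1) * G ≤ 1/2 * (((k:ℝ)+1) * r^k) * G' := by
    calc ((k:ℝ)+1+1) * r^(k+1) * G = ((k:ℝ)+2)*r^k*r*G := by ring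
      _ ≤ ((k:ℝ)+2)*r^k*r*(G'*P/y) := by
          apply mul_le_mul_of_nonneg_left hGle (by positivity)
      _ = ((k:ℝ)+2)*r^k*r*G'*P/y := by ring
      _ ≤ ((k:ℝ)+2)*r^k*r*G'*(y/(4*r))/y := by gcongr
      _ = ((k:ℝ)+2)*r^k*G'/4 := by field_simp
      _ ≤ 1/2 * (((k:ℝ)+1) * r^k) * G' := by
          nlinarith [mul_nonneg (mul_nonneg (Nat.cast_nonneg (α := ℝ) k) (pow_nonneg hr k)) hΓk1.le,
            mul_nonneg (pow_nonneg hr k) hΓk1.le]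
  calc ((k:ℝ)+1+1) * r^(k+1) * G ≤ 1/2 * (((k:ℝ)+1) * r^k) * G' := main
    _ = 1/2 * (((k:ℝ)+1) * r^k) * G' := rfl

lemma gammaMLpos (α : ℝ) (hα : 0 < α) (k : ℕ) : 0 < Real.Gamma (α * k + 1) :=
  Real.Gamma_pos_of_pos (by positivity)

lemma ml_summable (α : ℝ) (hα : 0 < α) (hα1 : α < 1) (z : ℝ) :
    Summable (fun k : ℕ => z ^ k / Real.Gamma (α * k + 1)) := by
  apply Summable.of_norm_bounded (summable_gamma α |z| hα hα1 (abs_nonneg z))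
  intro k
  rw [norm_div, Real.norm_of_nonneg (gammaMLpos α hα k).le, norm_pow, Real.norm_eq_abs,
    div_le_div_iff_of_pos_right (gammaMLpos α hα k)]
  nlinarith [abs_nonneg z, pow_nonneg (abs_nonneg z) k, Nat.cast_nonneg (α := ℝ) k]

lemma ml_deriv_summable (α : ℝ) (hα : 0 < α) (hα1 : α < 1) (z : ℝ) :
    Summable (fun k : ℕ => (k:ℝ) * z ^ (k-1) / Real.Gamma (α * k + 1)) := by
  apply Summable.of_norm_bounded (summable_gamma α (|z|+1) hα hα1 (by positivity))
  intro k
  simp only [norm_div, norm_mul, norm_pow, Real.norm_eq_abs, Nat.abs_cast,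
    abs_of_pos (gammaMLpos α hα k)]
  rw [div_le_div_iff_of_pos_right (gammaMLpos α hα k)]
  have h1 : |z| ^ (k-1) ≤ (|z|+1) ^ (k-1) := pow_le_pow_left₀ (abs_nonneg z) (by linarith) _
  have h2 : ((|z|:ℝ)+1) ^ (k-1) ≤ (|z|+1) ^ k :=
    pow_le_pow_right₀ (by linarith [abs_nonneg z]) (Nat.sub_le k 1)
  have h3 := h1.trans h2
  nlinarith [Nat.cast_nonneg (α := ℝ) k, pow_nonneg (abs_nonneg z) (k-1),
    pow_nonneg (by positivity : (0:ℝ) ≤ |z|+1) k]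

lemma ml_hasDerivAt (α : ℝ) (hα : 0 < α) (hα1 : α < 1) (z : ℝ) :
    HasDerivAt (mittagLeffler α)
      (∑' k : ℕ, (k:ℝ) * z ^ (k-1) / Real.Gamma (α * k + 1)) z := by
  have hR : (1:ℝ) ≤ |z| + 1 := by linarith [abs_nonneg z]
  have h := hasDerivAt_tsum_of_isPreconnected
    (u := fun k : ℕ => ((k:ℝ)+1) * (|z|+1) ^ k / Real.Gamma (α * k + 1))
    (g := fun (k : ℕ) (y : ℝ) => y ^ k / Real.Gamma (α * k + 1))
    (g' := fun (k : ℕ) (y : ℝ) => (k:ℝ) * y ^ (k-1) / Real.Gamma (α * k + 1))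
    (summable_gamma α (|z|+1) hα hα1 (by positivity))
    isOpen_ball (convex_ball (0:ℝ) (|z|+1)).isPreconnected
    (fun k y _ => (hasDerivAt_pow k y).div_const _)
    ?_ (mem_ball_self (by positivity)) ?_ (mem_ball_zero_iff.mpr (by simp; linarith [abs_nonneg z]))
  · exact h
  · intro k y hy
    rw [mem_ball_zero_iff, Real.norm_eq_abs] at hy
    simp only [norm_div, norm_mul, norm_pow, Real.norm_eq_abs, Nat.abs_cast,
      abs_of_pos (gammaMLpos α hα k)]
    rw [div_le_div_iff_of_pos_right (gammaMLpos α hα k)]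
    have h1 : |y| ^ (k-1) ≤ (|z|+1) ^ (k-1) := pow_le_pow_left₀ (abs_nonneg y) hy.le _
    have h2 : ((|z|:ℝ)+1) ^ (k-1) ≤ (|z|+1) ^ k := pow_le_pow_right₀ hR (Nat.sub_le k 1)
    have h3 := h1.trans h2
    nlinarith [Nat.cast_nonneg (α := ℝ) k, pow_nonneg (abs_nonneg y) (k-1),
      pow_nonneg (by positivity : (0:ℝ) ≤ |z|+1) k]
  · exact ml_summable α hα hα1 0

lemma beta_eqOn (p q : ℝ) :
    ∀ x ∈ Icc (0:ℝ) 1,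
      ((x:ℂ) ^ ((p:ℂ) - 1) * (1 - (x:ℂ)) ^ ((q:ℂ) - 1)) =
        ((x ^ (p-1) * (1-x) ^ (q-1) : ℝ) : ℂ) := by
  intro x hx
  rw [Complex.ofReal_mul, Complex.ofReal_cpow hx.1, Complex.ofReal_cpow (by linarith [hx.2])]
  push_cast
  ring_nf

lemma beta_integrableOn01 (p q : ℝ) (hp : 0 < p) (hq : 0 < q) :
    IntegrableOn (fun x : ℝ => x ^ (p-1) * (1-x) ^ (q-1)) (Ioo (0:ℝ) 1) := by
  have hC : IntervalIntegrable
      (fun x : ℝ => (x:ℂ) ^ ((p:ℂ) - 1) * (1 - (x:ℂ)) ^ ((q:ℂ) - 1)) volume 0 1 :=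
    Complex.betaIntegral_convergent (by simpa using hp) (by simpa using hq)
  have h2 : IntegrableOn
      (fun x : ℝ => (x:ℂ) ^ ((p:ℂ) - 1) * (1 - (x:ℂ)) ^ ((q:ℂ) - 1)) (Ioo (0:ℝ) 1) :=
    ((intervalIntegrable_iff_integrableOn_Ioc_of_le (by norm_num)).mp hC).mono_set Ioo_subset_Ioc_self
  have h3 := h2.re
  apply IntegrableOn.congr_fun h3 ?_ measurableSet_Ioo
  intro x hx
  have := beta_eqOn p q x (Ioo_subset_Icc_self hx)
  simp [this]

lemma beta_value01 (p q : ℝ) (hp : 0 < p) (hq : 0 < q) :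
    ∫ x in Ioo (0:ℝ) 1, x ^ (p-1) * (1-x) ^ (q-1) =
      Real.Gamma p * Real.Gamma q / Real.Gamma (p+q) := by
  have hC := Complex.Gamma_mul_Gamma_eq_betaIntegral (s := (p:ℂ)) (t := (q:ℂ))
    (by simpa using hp) (by simpa using hq)
  have hbi : Complex.betaIntegral (p:ℂ) (q:ℂ) =
      ((∫ x in (0:ℝ)..1, x ^ (p-1) * (1-x) ^ (q-1) : ℝ) : ℂ) := by
    rw [Complex.betaIntegral, ← intervalIntegral.integral_ofReal]
    apply intervalIntegral.integral_congr
    intro x hx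
    rw [uIcc_of_le (by norm_num : (0:ℝ) ≤ 1)] at hx
    exact beta_eqOn p q x hx
  rw [hbi, ← Complex.ofReal_add, Complex.Gamma_ofReal, Complex.Gamma_ofReal,
    Complex.Gamma_ofReal, ← Complex.ofReal_mul, ← Complex.ofReal_mul] at hC
  have hG : Real.Gamma (p+q) ≠ 0 := ne_of_gt (Real.Gamma_pos_of_pos (by linarith))
  have hR : Real.Gamma p * Real.Gamma q =
      Real.Gamma (p+q) * ∫ x in (0:ℝ)..1, x ^ (p-1) * (1-x) ^ (q-1) := by
    exact_mod_cast hC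
  rw [intervalIntegral.integral_of_le (by norm_num : (0:ℝ) ≤ 1),
    MeasureTheory.integral_Ioc_eq_integral_Ioo] at hR
  field_simp [hR]
  rw [hR]; ring

lemma image_scale (U : ℝ) (hU : 0 < U) : (fun x : ℝ => U * x) '' Ioo 0 1 = Ioo 0 U := by
  rw [show (fun x : ℝ => U * x) = (U * ·) from rfl, image_mul_left_Ioo hU]
  simp

lemma hasD (U : ℝ) : ∀ x ∈ Ioo (0:ℝ) 1, HasDerivWithinAt (fun x : ℝ => U * x) U (Ioo 0 1) x :=
  fun x _ => ((hasDerivAt_id x).const_mul U).hasDerivWithinAt.congr_deriv (by simp)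

lemma injOn_scale (U : ℝ) (hU : 0 < U) : InjOn (fun x : ℝ => U * x) (Ioo 0 1) :=
  fun x _ y _ h => by
    simpa [hU.ne'] using h

-- pointwise identity on Ioo 0 1

lemma scale_eq (p q U : ℝ) (hU : 0 < U) : ∀ x ∈ Ioo (0:ℝ) 1,
    |U| • ((U*x) ^ (p-1) * (U - U*x) ^ (q-1)) =
      (U ^ (p+q-1)) • (x ^ (p-1) * (1-x) ^ (q-1)) := by
  intro x hx
  obtain ⟨hx0, hx1⟩ := hx
  rw [abs_of_pos hU, smul_eq_mul, smul_eq_mul,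
    show U - U*x = U * (1-x) by ring,
    Real.mul_rpow hU.le hx0.le, Real.mul_rpow hU.le (by linarith),
    show U ^ (p+q-1) = U * (U ^ (p-1) * U ^ (q-1)) by
      rw [← Real.rpow_add hU, show U * U ^ (p - 1 + (q - 1)) = U ^ (1:ℝ) * U ^ (p - 1 + (q - 1)) by rw [Real.rpow_one], ← Real.rpow_add hU]; ring_nf]
  ring

lemma beta_integrableOnU (p q U : ℝ) (hp : 0 < p) (hq : 0 < q) (hU : 0 < U) :
    IntegrableOn (fun u : ℝ => u ^ (p-1) * (U-u) ^ (q-1)) (Ioo (0:ℝ) U) := by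
  rw [← image_scale U hU,
    integrableOn_image_iff_integrableOn_abs_deriv_smul measurableSet_Ioo (hasD U) (injOn_scale U hU)]
  apply IntegrableOn.congr_fun ((beta_integrableOn01 p q hp hq).smul (U ^ (p+q-1))) ?_ measurableSet_Ioo
  intro x hx
  exact (scale_eq p q U hU x hx).symm

lemma beta_valueU (p q U : ℝ) (hp : 0 < p) (hq : 0 < q) (hU : 0 < U) :
    ∫ u in Ioo (0:ℝ) U, u ^ (p-1) * (U-u) ^ (q-1) =
      Real.Gamma p * Real.Gamma q / Real.Gamma (p+q) * U ^ (p+q-1) := by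
  rw [← image_scale U hU,
    integral_image_eq_integral_abs_deriv_smul measurableSet_Ioo (hasD U) (injOn_scale U hU)]
  rw [setIntegral_congr_fun measurableSet_Ioo (scale_eq p q U hU)]
  simp_rw [smul_eq_mul, MeasureTheory.integral_const_mul, beta_value01 p q hp hq]
  ring

lemma deriv_pos_of_strictMonoOn {a b : ℝ} {ψ : ℝ → ℝ}
    (hψ : ContDiffOn ℝ 1 ψ (Set.Icc a b)) (hmono : StrictMonoOn ψ (Set.Icc a b))
    (hψ' : ∀ t ∈ Set.Icc a b, deriv ψ t ≠ 0) {τ : ℝ} (hτ : τ ∈ Set.Ioo a b) :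
    0 < deriv ψ τ ∧ HasDerivAt ψ (deriv ψ τ) τ := by
  have hIccmem : Set.Icc a b ∈ nhds τ := Icc_mem_nhds hτ.1 hτ.2
  have hdiff : DifferentiableAt ℝ ψ τ :=
    ((hψ.differentiableOn (by norm_num) τ (Ioo_subset_Icc_self hτ)).differentiableAt hIccmem)
  have hD : HasDerivAt ψ (deriv ψ τ) τ := hdiff.hasDerivAt
  refine ⟨?_, hD⟩
  have hne : deriv ψ τ ≠ 0 := hψ' τ (Ioo_subset_Icc_self hτ)
  rcases hne.lt_or_gt with hlt | hgt
  · exfalso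
    have hslope := hasDerivAt_iff_tendsto_slope.mp hD
    have hIoo : Ioo a b ∈ nhds τ := isOpen_Ioo.mem_nhds hτ
    have hev : ∀ᶠ s in nhdsWithin τ {τ}ᶜ, 0 ≤ slope ψ τ s := by
      filter_upwards [nhdsWithin_le_nhds hIoo, self_mem_nhdsWithin] with s hs hsne
      have hsne' : s ≠ τ := hsne
      rw [slope_def_field]
      rcases hsne'.lt_or_gt with h | h
      · have h1 := hmono (Ioo_subset_Icc_self hs) (Ioo_subset_Icc_self hτ) h
        have h2 : ψ s - ψ τ ≤ 0 := by linarith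
        have h3 : s - τ < 0 := by linarith
        rw [div_nonneg_iff]; right; exact ⟨h2, h3.le⟩
      · apply div_nonneg
        · have := hmono (Ioo_subset_Icc_self hτ) (Ioo_subset_Icc_self hs) h
          linarith
        · linarith
    have := ge_of_tendsto hslope hev
    linarith
  · exact hgt

theorem caputo_left_mittagLeffler (a b α lam : ℝ) (ψ : ℝ → ℝ) (hab : a < b)
    (hψ : ContDiffOn ℝ 1 ψ (Set.Icc a b))
    (hmono : StrictMonoOn ψ (Set.Icc a b))
    (hψ' : ∀ t ∈ Set.Icc a b, deriv ψ t ≠ 0)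
    (hα : α ∈ Set.Ioo (0 : ℝ) 1) :
    ∀ t ∈ Set.Ioc a b,
      psiCaputoLeft a α ψ (fun s => mittagLeffler α (lam * (ψ s - ψ a) ^ α)) t =
        lam * mittagLeffler α (lam * (ψ t - ψ a) ^ α) := by
  obtain ⟨hα1, hα2⟩ := hα
  intro t ht
  obtain ⟨hta, htb⟩ := ht
  have haIcc : a ∈ Icc a b := ⟨le_refl a, hab.le⟩
  have htIcc : t ∈ Icc a b := ⟨hta.le, htb⟩
  set U : ℝ := ψ t - ψ a with hU_def
  have hU : 0 < U := sub_pos.mpr (hmono haIcc htIcc hta)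
  have hG1a : 0 < Real.Gamma (1-α) := Real.Gamma_pos_of_pos (by linarith)
  set g : ℝ → ℝ := fun u =>
    (∑' k : ℕ, (k:ℝ) * (lam * u ^ α) ^ (k-1) / Real.Gamma (α * k + 1)) * (lam * α * u ^ (α-1))
    with hg_def
  set G : ℝ → ℝ := fun u => (U - u) ^ (-α) * g u with hG_def
  set x : ℝ → ℝ := fun s => mittagLeffler α (lam * (ψ s - ψ a) ^ α) with hx_def
  -- Step A : derivative of x on Ioo a t
  have hderiv : ∀ τ ∈ Ioo a t, deriv x τ = g (ψ τ - ψ a) * deriv ψ τ := by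
    intro τ hτ
    have hτb : τ ∈ Ioo a b := ⟨hτ.1, lt_of_lt_of_le hτ.2 htb⟩
    obtain ⟨hψpos, hψD⟩ := deriv_pos_of_strictMonoOn hψ hmono hψ' hτb
    have hu : 0 < ψ τ - ψ a := sub_pos.mpr (hmono haIcc (Ioo_subset_Icc_self hτb) hτb.1)
    have h0 : HasDerivAt (fun s => ψ s - ψ a) (deriv ψ τ) τ := hψD.sub_const _
    have h1 : HasDerivAt (fun s => (ψ s - ψ a) ^ α)
        (deriv ψ τ * α * (ψ τ - ψ a) ^ (α-1)) τ := h0.rpow_const (Or.inl hu.ne')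
    have h2 : HasDerivAt (fun s => lam * (ψ s - ψ a) ^ α)
        (lam * (deriv ψ τ * α * (ψ τ - ψ a) ^ (α-1))) τ := h1.const_mul lam
    have h3 := ml_hasDerivAt α hα1 hα2 (lam * (ψ τ - ψ a) ^ α)
    have h4 : HasDerivAt x
        ((∑' k : ℕ, (k:ℝ) * (lam * (ψ τ - ψ a) ^ α) ^ (k-1) / Real.Gamma (α * k + 1)) *
          (lam * (deriv ψ τ * α * (ψ τ - ψ a) ^ (α-1)))) τ := by rw [hx_def]; exact h3.comp τ h2
    rw [h4.deriv, hg_def]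
    ring
  -- rewrite the interval integral
  rw [psiCaputoLeft, intervalIntegral.integral_of_le hta.le,
    MeasureTheory.integral_Ioc_eq_integral_Ioo]
  have hψDW : ∀ τ ∈ Ioo a t, HasDerivWithinAt (fun s => ψ s - ψ a) (deriv ψ τ) (Ioo a t) τ := by
    intro τ hτ
    have hτb : τ ∈ Ioo a b := ⟨hτ.1, lt_of_lt_of_le hτ.2 htb⟩
    exact ((deriv_pos_of_strictMonoOn hψ hmono hψ' hτb).2.sub_const _).hasDerivWithinAt
  have hφinj : InjOn (fun s => ψ s - ψ a) (Ioo a t) := by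
    intro s hs r hr h
    have hsI : s ∈ Icc a b := Ioo_subset_Icc_self ⟨hs.1, lt_of_lt_of_le hs.2 htb⟩
    have hrI : r ∈ Icc a b := Ioo_subset_Icc_self ⟨hr.1, lt_of_lt_of_le hr.2 htb⟩
    have : ψ s = ψ r := by dsimp only at h; linarith
    exact hmono.injOn hsI hrI this
  have himg : (fun s => ψ s - ψ a) '' Ioo a t = Ioo 0 U := by
    have h1 : ψ '' Ioo a t = Ioo (ψ a) (ψ t) := by
      apply Subset.antisymm
      · rintro _ ⟨τ, hτ, rfl⟩
        have hτI : τ ∈ Icc a b := Ioo_subset_Icc_self ⟨hτ.1, lt_of_lt_of_le hτ.2 htb⟩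
        exact ⟨hmono haIcc hτI hτ.1, hmono hτI htIcc hτ.2⟩
      · exact intermediate_value_Ioo hta.le
          (hψ.continuousOn.mono (Icc_subset_Icc le_rfl htb))
    have h2 : (fun s => ψ s - ψ a) = (fun v => v - ψ a) ∘ ψ := rfl
    rw [h2, image_comp, h1, image_sub_const_Ioo]
    simp [hU_def]
  have hjac := integral_image_eq_integral_abs_deriv_smul measurableSet_Ioo hψDW hφinj G
  rw [himg] at hjac
  have hcong1 : EqOn (fun τ => (ψ t - ψ τ) ^ (-α) * deriv x τ)
      (fun τ => |deriv ψ τ| • G (ψ τ - ψ a)) (Ioo a t) := by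
    intro τ hτ
    have hτb : τ ∈ Ioo a b := ⟨hτ.1, lt_of_lt_of_le hτ.2 htb⟩
    have hψpos := (deriv_pos_of_strictMonoOn hψ hmono hψ' hτb).1
    dsimp only
    rw [hderiv τ hτ, abs_of_pos hψpos, smul_eq_mul, hG_def]
    have : ψ t - ψ τ = U - (ψ τ - ψ a) := by rw [hU_def]; ring
    rw [this]
    ring
  rw [setIntegral_congr_fun measurableSet_Ioo hcong1, ← hjac]
  -- now a pure integral over Ioo 0 U
  -- the summand functions
  set F : ℕ → ℝ → ℝ := fun j u =>
    lam ^ (j+1) / Real.Gamma (α * ((j:ℝ)+1)) * (u ^ (α * ((j:ℝ)+1) - 1) * (U - u) ^ (-α))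
    with hF_def
  have hppos : ∀ j : ℕ, (0:ℝ) < α * ((j:ℝ)+1) := by
    intro j; have : (0:ℝ) < (j:ℝ)+1 := by positivity
    positivity
  have hGpos : ∀ j : ℕ, (0:ℝ) < Real.Gamma (α * ((j:ℝ)+1)) :=
    fun j => Real.Gamma_pos_of_pos (hppos j)
  -- Step C : pointwise expansion of the integrand
  have hCeq : EqOn G (fun u => ∑' j : ℕ, F j u) (Ioo 0 U) := by
    intro u hu
    obtain ⟨hu0, huU⟩ := hu
    have hzsum := ml_deriv_summable α hα1 hα2 (lam * u ^ α)
    have hC : G u = ∑' k : ℕ, ((U - u) ^ (-α) * (lam * α * u ^ (α-1))) *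
        ((k:ℝ) * (lam * u ^ α) ^ (k-1) / Real.Gamma (α * k + 1)) := by
      rw [tsum_mul_left, hG_def, hg_def]
      ring
    rw [hC, Summable.tsum_eq_zero_add (hzsum.mul_left _)]
    simp only [Nat.cast_zero, zero_mul, mul_zero, zero_div, zero_add]
    apply tsum_congr
    intro j
    have hGj : Real.Gamma (α * ((j:ℝ)+1) + 1) =
        α * ((j:ℝ)+1) * Real.Gamma (α * ((j:ℝ)+1)) := Real.Gamma_add_one (hppos j).ne'
    have hzj : (lam * u ^ α) ^ j = lam ^ j * u ^ (α * (j:ℝ)) := by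
      rw [mul_pow, Real.rpow_mul hu0.le, Real.rpow_natCast]
    have huj : u ^ (α-1) * u ^ (α * (j:ℝ)) = u ^ (α * ((j:ℝ)+1) - 1) := by
      rw [← Real.rpow_add hu0]
      ring_nf
    rw [hF_def]
    dsimp only
    rw [Nat.add_sub_cancel]
    push_cast
    rw [hGj, hzj, ← huj, pow_succ]
    field_simp
  rw [setIntegral_congr_fun measurableSet_Ioo hCeq]
  have hq : (0:ℝ) < 1 - α := by linarith
  have hexp : ((1:ℝ) - α) - 1 = -α := by ring
  have hbetaInt : ∀ j : ℕ,
      IntegrableOn (fun u => u ^ (α * ((j:ℝ)+1) - 1) * (U - u) ^ (-α)) (Ioo 0 U) := by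
    intro j
    have h := beta_integrableOnU (α * ((j:ℝ)+1)) (1-α) U (hppos j) hq hU
    simpa only [hexp] using h
  have hFint : ∀ j : ℕ, Integrable (F j) (volume.restrict (Ioo 0 U)) := by
    intro j
    simp only [hF_def]
    exact ((hbetaInt j).const_mul _)
  have hIntVal : ∀ c : ℝ, ∀ j : ℕ,
      ∫ u in Ioo 0 U, c / Real.Gamma (α * ((j:ℝ)+1)) * (u ^ (α * ((j:ℝ)+1) - 1) * (U - u) ^ (-α))
        = c * Real.Gamma (1-α) * U ^ (α * (j:ℝ)) / Real.Gamma (α * (j:ℝ) + 1) := by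
    intro c j
    rw [MeasureTheory.integral_const_mul]
    have hbv := beta_valueU (α * ((j:ℝ)+1)) (1-α) U (hppos j) hq hU
    simp only [hexp, show α * ((j:ℝ)+1) + (1-α) = α * (j:ℝ) + 1 from by ring,
      show α * ((j:ℝ)+1) + (1-α) - 1 = α * (j:ℝ) from by ring] at hbv
    rw [hbv]
    field_simp
    ring
  have hnorm : ∀ j : ℕ, (∫ u in Ioo 0 U, ‖F j u‖)
      = |lam| ^ (j+1) * Real.Gamma (1-α) * U ^ (α * (j:ℝ)) / Real.Gamma (α * (j:ℝ) + 1) := by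
    intro j
    have heqn : EqOn (fun u => ‖F j u‖)
        (fun u => |lam| ^ (j+1) / Real.Gamma (α * ((j:ℝ)+1)) *
          (u ^ (α * ((j:ℝ)+1) - 1) * (U - u) ^ (-α))) (Ioo 0 U) := by
      intro u hu
      obtain ⟨h0, h1⟩ := hu
      simp only [hF_def]
      rw [Real.norm_eq_abs, abs_mul, abs_div, abs_pow, abs_of_pos (hGpos j), abs_mul,
        abs_of_pos (Real.rpow_pos_of_pos h0 _), abs_of_pos (Real.rpow_pos_of_pos (by linarith) _)]
    rw [setIntegral_congr_fun measurableSet_Ioo heqn, hIntVal]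
  have hUconv : ∀ j : ℕ, U ^ (α * (j:ℝ)) = (U ^ α) ^ j := by
    intro j; rw [Real.rpow_mul hU.le, Real.rpow_natCast]
  have hFsum : Summable (fun j : ℕ => ∫ u in Ioo 0 U, ‖F j u‖) := by
    have heq : (fun j : ℕ => ∫ u in Ioo 0 U, ‖F j u‖)
        = fun j : ℕ => (|lam| * Real.Gamma (1-α)) *
            ((|lam| * U ^ α) ^ j / Real.Gamma (α * (j:ℝ) + 1)) := by
      funext j
      rw [hnorm j, mul_pow, pow_succ, hUconv j]
      ring
    rw [heq]
    exact (ml_summable α hα1 hα2 (|lam| * U ^ α)).mul_left _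
  rw [← MeasureTheory.integral_tsum_of_summable_integral_norm hFint hFsum]
  have hvals : ∀ j : ℕ, (∫ u in Ioo 0 U, F j u)
      = (Real.Gamma (1-α) * lam) * ((lam * U ^ α) ^ j / Real.Gamma (α * (j:ℝ) + 1)) := by
    intro j
    have : (∫ u in Ioo 0 U, F j u) = ∫ u in Ioo 0 U,
        lam ^ (j+1) / Real.Gamma (α * ((j:ℝ)+1)) *
          (u ^ (α * ((j:ℝ)+1) - 1) * (U - u) ^ (-α)) := by
      apply setIntegral_congr_fun measurableSet_Ioo
      intro u hu
      simp only [hF_def]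
    rw [this, hIntVal, mul_pow, pow_succ, hUconv j]
    ring
  rw [tsum_congr hvals, tsum_mul_left, mittagLeffler]
  field_simp
end

section
/- Let α ∈ (0,1) and λ ∈ ℝ. Then for all t ∈ [a,b), the right ψ-Caputo derivative of the function t ↦ E_α(λ(ψ(b) − ψ(t))^α) satisfies ^CD_{b−}^{α,ψ}[E_α(λ(ψ(b) − ψ(·))^α)](t) = λ · E_α(λ(ψ(b) − ψ(t))^α). -/
open Real Set

/-- The right ψ-Caputo fractional derivative of order `α ∈ (0,1)` with upper terminal `b`. -/
noncomputable def psiCaputoRight (b α : ℝ) (ψ x : ℝ → ℝ) (t : ℝ) : ℝ :=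
  -(1 / Real.Gamma (1 - α)) * ∫ τ in t..b, (ψ τ - ψ t) ^ (-α) * deriv x τ

open Filter in
lemma gamma_summable {α : ℝ} (hα : 0 < α) (β z : ℝ) :
    Summable (fun k : ℕ => z ^ k / Real.Gamma (α * k + β)) := by
  obtain ⟨c, hc1, hzc⟩ : ∃ c : ℝ, 1 ≤ c ∧ |z| < c :=
    ⟨|z| + 1, by linarith [abs_nonneg z], by linarith⟩
  set q : ℝ := c ^ (2 / α) with hq
  have hq1 : 1 ≤ q := Real.one_le_rpow hc1 (by positivity)
  obtain ⟨M, hMq, hM1⟩ : ∃ M : ℕ, q ^ 2 ≤ (M : ℝ) ∧ 1 ≤ M :=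
    ⟨⌈q ^ 2⌉₊ + 1, le_trans (Nat.le_ceil _) (by exact_mod_cast Nat.le_succ _),
      Nat.le_add_left 1 _⟩
  have hT : Tendsto (fun k : ℕ => α * k + β) atTop atTop := by
    apply Tendsto.atTop_add _ tendsto_const_nhds
    exact Tendsto.const_mul_atTop hα tendsto_natCast_atTop_atTop
  have key : ∀ᶠ k : ℕ in atTop, c ^ k ≤ Real.Gamma (α * k + β) := by
    have h1 : ∀ᶠ k : ℕ in atTop, (2 * M + 4 : ℝ) ≤ α * k + β := hT.eventually_ge_atTop _
    have h2 : ∀ᶠ k : ℕ in atTop, (2 - β) ≤ α / 2 * k :=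
      ((tendsto_natCast_atTop_atTop (R := ℝ)).const_mul_atTop (half_pos hα)).eventually_ge_atTop _
    filter_upwards [h1, h2] with k hk1 hk2
    set T : ℝ := α * k + β with hTk
    have hT4 : (4 : ℝ) ≤ T := by
      have : (0:ℝ) ≤ 2 * M := by positivity
      linarith
    have hfl4 : 4 ≤ ⌊T⌋₊ := Nat.le_floor (by push_cast; linarith)
    obtain ⟨m, hm1⟩ : ∃ m : ℕ, m + 1 = ⌊T⌋₊ := ⟨⌊T⌋₊ - 1, by omega⟩
    have hm1' : (m : ℝ) + 1 = (⌊T⌋₊ : ℝ) := by exact_mod_cast hm1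
    have hmT : (m : ℝ) + 1 ≤ T := by rw [hm1']; exact Nat.floor_le (by linarith)
    have hTm : T - 2 ≤ (m : ℝ) := by
      have h := Nat.lt_floor_add_one T
      rw [← hm1'] at h; linarith
    have h2M : 2 * M ≤ m := by
      have : (2 * M : ℝ) ≤ (m : ℝ) := by push_cast; linarith
      exact_mod_cast this
    have hMm : M ≤ m := by omega
    have hG1 : (m.factorial : ℝ) ≤ Real.Gamma T := by
      rw [← Real.Gamma_nat_eq_factorial]
      apply Real.Gamma_strictMonoOn_Ici.monotoneOn _ _ hmT
      · have : (1:ℝ) ≤ (m:ℝ) := by exact_mod_cast hM1.trans hMm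
        simp only [mem_Ici]; linarith
      · simp only [mem_Ici]; linarith
    have hG2 : (M : ℝ) ^ (m - M) ≤ (m.factorial : ℝ) := by
      have h1 := Nat.factorial_mul_pow_sub_le_factorial hMm
      have h2 : M ^ (m - M) ≤ m.factorial :=
        le_trans (Nat.le_mul_of_pos_left _ (Nat.factorial_pos M)) h1
      exact_mod_cast h2
    have hG3 : q ^ m ≤ (M : ℝ) ^ (m - M) := by
      calc q ^ m ≤ q ^ (2 * (m - M)) := by apply pow_le_pow_right₀ hq1; omega
        _ = (q ^ 2) ^ (m - M) := by rw [pow_mul]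
        _ ≤ (M : ℝ) ^ (m - M) := pow_le_pow_left₀ (by positivity) hMq _
    have hG4 : c ^ k ≤ q ^ m := by
      have hcm : (k : ℝ) ≤ 2 / α * m := by
        rw [div_mul_eq_mul_div, le_div_iff₀ hα]
        have : α / 2 * k ≤ (m : ℝ) := by linarith
        linarith
      calc c ^ k = c ^ (k : ℝ) := by rw [Real.rpow_natCast]
        _ ≤ c ^ (2 / α * m) := Real.rpow_le_rpow_of_exponent_le hc1 hcm
        _ = (c ^ (2/α)) ^ (m : ℝ) := by rw [← Real.rpow_mul (by positivity)]
        _ = q ^ m := by rw [hq, Real.rpow_natCast]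
    linarith
  refine Summable.of_norm_bounded_eventually (g := fun k => (|z| / c) ^ k) ?_ ?_
  · apply summable_geometric_of_lt_one (by positivity)
    rw [div_lt_one (by positivity)]; exact hzc
  · rw [Nat.cofinite_eq_atTop]; filter_upwards [key] with k hk
    have hGpos : 0 < Real.Gamma (α * k + β) := lt_of_lt_of_le (by positivity) hk
    have h1 : ‖z ^ k / Real.Gamma (α * k + β)‖ = |z| ^ k / Real.Gamma (α * k + β) := by
      rw [norm_div, norm_pow, Real.norm_eq_abs, Real.norm_eq_abs, abs_of_pos hGpos]
    rw [h1, div_pow]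
    gcongr


lemma deriv_series_summable {α : ℝ} (hα : 0 < α) (w : ℝ) :
    Summable (fun k : ℕ => (k : ℝ) * w ^ (k - 1) / Real.Gamma (α * k + 1)) := by
  refine Summable.of_norm_bounded
    (g := fun k => (2 * (|w| + 1)) ^ k / Real.Gamma (α * k + 1))
    (gamma_summable hα 1 _) (fun k => ?_)
  have hG : 0 < Real.Gamma (α * k + 1) := Real.Gamma_pos_of_pos (by positivity)
  rw [norm_div, Real.norm_eq_abs, Real.norm_eq_abs, abs_of_pos hG]
  rw [div_le_div_iff_of_pos_right hG, abs_mul, abs_pow]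
  calc |(k:ℝ)| * |w| ^ (k-1) ≤ 2 ^ k * (|w|+1) ^ k := by
        apply mul_le_mul
        · rw [abs_of_nonneg (by positivity)]
          exact_mod_cast (Nat.lt_two_pow_self (n := k)).le
        · calc |w| ^ (k-1) ≤ (|w|+1) ^ (k-1) :=
                pow_le_pow_left₀ (abs_nonneg w) (by linarith) _
            _ ≤ (|w|+1) ^ k := pow_le_pow_right₀ (by linarith [abs_nonneg w]) (Nat.sub_le k 1)
        · positivity
        · positivity
    _ = (2 * (|w|+1)) ^ k := by rw [mul_pow]

lemma ML_summable {α : ℝ} (hα : 0 < α) (z : ℝ) :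
    Summable (fun k : ℕ => z ^ k / Real.Gamma (α * k + 1)) := gamma_summable hα 1 z

lemma ML_hasDerivAt {α : ℝ} (hα : 0 < α) (z : ℝ) :
    HasDerivAt (mittagLeffler α)
      (∑' k : ℕ, (k : ℝ) * z ^ (k - 1) / Real.Gamma (α * k + 1)) z := by
  have h := hasDerivAt_tsum_of_isPreconnected
    (u := fun k : ℕ => (k : ℝ) * (|z| + 1) ^ (k - 1) / Real.Gamma (α * k + 1))
    (g := fun (k : ℕ) (y : ℝ) => y ^ k / Real.Gamma (α * k + 1))
    (g' := fun (k : ℕ) (y : ℝ) => (k : ℝ) * y ^ (k - 1) / Real.Gamma (α * k + 1))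
    (t := Metric.ball (0 : ℝ) (|z| + 1)) (y₀ := 0)
    (deriv_series_summable hα _) Metric.isOpen_ball
    (convex_ball _ _).isPreconnected
    (fun k y _ => by simpa using (hasDerivAt_pow k y).div_const (Real.Gamma (α * k + 1)))
    (fun k y hy => ?_) (by simp [abs_nonneg, Metric.mem_ball]; linarith [abs_nonneg z])
    (ML_summable hα 0) (by simp [Metric.mem_ball]; linarith)
  · exact h
  · have hG : 0 < Real.Gamma (α * k + 1) := Real.Gamma_pos_of_pos (by positivity)
    rw [Real.norm_eq_abs, abs_div, abs_of_pos hG, abs_mul, abs_pow,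
      abs_of_nonneg (by positivity : (0:ℝ) ≤ (k:ℝ))]
    rw [div_le_div_iff_of_pos_right hG]
    apply mul_le_mul_of_nonneg_left _ (by positivity)
    apply pow_le_pow_left₀ (abs_nonneg y)
    exact le_of_lt (by simpa [Metric.mem_ball] using hy)

open intervalIntegral MeasureTheory in
lemma realBeta_scaled {u v s : ℝ} (hu : 0 < u) (hv : 0 < v) (hs : 0 < s) :
    ∫ x in (0:ℝ)..s, x ^ (u-1) * (s - x) ^ (v-1) =
      s ^ (u+v-1) * (Real.Gamma u * Real.Gamma v / Real.Gamma (u+v)) := by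
  have hGuv : Real.Gamma (u+v) ≠ 0 := (Real.Gamma_pos_of_pos (by linarith)).ne'
  -- reduce to an identity multiplied by Gamma (u+v)
  have key : Real.Gamma (u+v) * (∫ x in (0:ℝ)..s, x ^ (u-1) * (s - x) ^ (v-1)) =
      Real.Gamma (u+v) * (s ^ (u+v-1) * (Real.Gamma u * Real.Gamma v / Real.Gamma (u+v))) := by
    have h1 : ((∫ x in (0:ℝ)..s, x ^ (u-1) * (s - x) ^ (v-1) : ℝ) : ℂ) =
        ∫ x in (0:ℝ)..s, (x:ℂ) ^ ((u:ℂ)-1) * ((s:ℂ) - x) ^ ((v:ℂ)-1) := by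
      rw [← intervalIntegral.integral_ofReal]
      apply intervalIntegral.integral_congr
      intro x hx
      rw [uIcc_of_le hs.le] at hx
      have e1 : ((x ^ (u-1) : ℝ) : ℂ) = (x:ℂ) ^ ((u:ℂ)-1) := by
        rw [Complex.ofReal_cpow hx.1]; push_cast; ring_nf
      have e2 : (((s - x) ^ (v-1) : ℝ) : ℂ) = ((s:ℂ) - x) ^ ((v:ℂ)-1) := by
        rw [Complex.ofReal_cpow (by linarith [hx.2])]; push_cast; ring_nf
      simp only [Complex.ofReal_mul, e1, e2]
    have h2 := Complex.betaIntegral_scaled (u:ℂ) (v:ℂ) hs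
    have h3 := Complex.Gamma_mul_Gamma_eq_betaIntegral
      (by simpa using hu : 0 < Complex.re (u:ℂ)) (by simpa using hv : 0 < Complex.re (v:ℂ))
    have h4 : ((Real.Gamma (u+v) * (∫ x in (0:ℝ)..s, x ^ (u-1) * (s - x) ^ (v-1)) : ℝ) : ℂ) =
        ((s ^ (u+v-1) * (Real.Gamma u * Real.Gamma v) : ℝ) : ℂ) := by
      push_cast
      rw [h1, ← Complex.Gamma_ofReal, ← Complex.Gamma_ofReal u, ← Complex.Gamma_ofReal v]
      push_cast
      rw [h2, Complex.ofReal_cpow hs.le]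
      push_cast
      rw [← mul_assoc, h3]
      ring
    have h5 := Complex.ofReal_inj.mp h4
    rw [h5]; field_simp
  exact mul_left_cancel₀ hGuv key

open intervalIntegral MeasureTheory in
lemma realBeta_intervalIntegrable {u v s : ℝ} (hu : 0 < u) (hv : 0 < v) (hs : 0 < s) :
    IntervalIntegrable (fun x => x ^ (u-1) * (s - x) ^ (v-1)) volume 0 s := by
  have hmeas : ∀ c d : ℝ, AEStronglyMeasurable (fun x : ℝ => x ^ (u-1) * (s - x) ^ (v-1))
      (volume.restrict (Ioc c d)) := by
    intro c d
    apply Measurable.aestronglyMeasurable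
    fun_prop
  rw [intervalIntegrable_iff_integrableOn_Ioc_of_le hs.le]
  have hsub : Ioc (0:ℝ) s ⊆ Ioc 0 (s/2) ∪ Ioc (s/2) s := by
    intro x hx
    rcases le_or_gt x (s/2) with h | h
    · exact Or.inl ⟨hx.1, h⟩
    · exact Or.inr ⟨h, hx.2⟩
  apply IntegrableOn.mono_set _ hsub
  apply IntegrableOn.union
  · -- near 0
    set C : ℝ := max ((s/2) ^ (v-1)) (s ^ (v-1)) with hC
    have hC0 : 0 ≤ C := le_trans (Real.rpow_nonneg (by linarith) _) (le_max_left _ _)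
    have hbound : Integrable (fun x : ℝ => C * x ^ (u-1)) (volume.restrict (Ioc 0 (s/2))) := by
      apply Integrable.const_mul
      exact (intervalIntegrable_iff_integrableOn_Ioc_of_le (by linarith : (0:ℝ) ≤ s/2)).mp
        (intervalIntegral.intervalIntegrable_rpow' (by linarith))
    apply hbound.mono' (hmeas 0 (s/2))
    rw [ae_restrict_iff' measurableSet_Ioc]
    apply Filter.Eventually.of_forall
    intro x hx
    have hx0 : 0 < x := hx.1
    have hxs : x ≤ s / 2 := hx.2
    have h1 : (0:ℝ) ≤ x ^ (u-1) := Real.rpow_nonneg hx0.le _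
    have h2 : (0:ℝ) ≤ (s - x) ^ (v-1) := Real.rpow_nonneg (by linarith) _
    rw [Real.norm_eq_abs, abs_of_nonneg (by positivity), mul_comm]
    apply mul_le_mul_of_nonneg_right _ h1
    rcases le_or_gt 1 v with h | h
    · exact le_trans (Real.rpow_le_rpow (by linarith) (by linarith) (by linarith))
        (le_max_right _ _)
    · refine le_trans ?_ (le_max_left _ _)
      exact Real.rpow_le_rpow_of_nonpos (by linarith) (by linarith) (by linarith)
  · -- near s
    set C : ℝ := max ((s/2) ^ (u-1)) (s ^ (u-1)) with hC
    have hbound : Integrable (fun x : ℝ => C * (s - x) ^ (v-1))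
        (volume.restrict (Ioc (s/2) s)) := by
      apply Integrable.const_mul
      rw [show (fun x : ℝ => (s - x) ^ (v-1)) = (fun x : ℝ => ((s - x)) ^ (v-1)) from rfl]
      refine (intervalIntegrable_iff_integrableOn_Ioc_of_le (by linarith : s/2 ≤ s)).mp ?_
      have h0 : IntervalIntegrable (fun y : ℝ => y ^ (v-1)) volume 0 (s/2) :=
        intervalIntegral.intervalIntegrable_rpow' (by linarith)
      have h1 := h0.comp_sub_left s
      simp only [sub_zero] at h1
      have h2 : s - s/2 = s/2 := by ring
      rw [h2] at h1
      exact h1.symm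
    apply hbound.mono' (hmeas (s/2) s)
    rw [ae_restrict_iff' measurableSet_Ioc]
    apply Filter.Eventually.of_forall
    intro x hx
    have hx0 : s/2 < x := hx.1
    have hxs : x ≤ s := hx.2
    have h1 : (0:ℝ) ≤ x ^ (u-1) := Real.rpow_nonneg (by linarith) _
    have h2 : (0:ℝ) ≤ (s - x) ^ (v-1) := Real.rpow_nonneg (by linarith) _
    rw [Real.norm_eq_abs, abs_of_nonneg (by positivity)]
    apply mul_le_mul_of_nonneg_right _ h2
    rcases le_or_gt 1 u with h | h
    · exact le_trans (Real.rpow_le_rpow (by linarith) (by linarith) (by linarith))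
        (le_max_right _ _)
    · refine le_trans ?_ (le_max_left _ _)
      exact Real.rpow_le_rpow_of_nonpos (by linarith) (by linarith) (by linarith)

open intervalIntegral MeasureTheory in
lemma realBeta_Ioo_integrable {p q c d : ℝ} (hp : 0 < p) (hq : 0 < q) (hcd : c < d) :
    IntegrableOn (fun x => (x - c) ^ (p-1) * (d - x) ^ (q-1)) (Ioo c d) volume := by
  have hfun : (fun x : ℝ => ((x - c) ^ (p-1) * ((d - c) - (x - c)) ^ (q-1)))
      = (fun x : ℝ => (x - c) ^ (p-1) * (d - x) ^ (q-1)) := by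
    funext x; ring_nf
  have h0 := realBeta_intervalIntegrable hp hq (by linarith : 0 < d - c)
  have h1 := h0.comp_sub_right c
  simp only [zero_add, sub_add_cancel] at h1
  rw [hfun] at h1
  rw [← intervalIntegrable_iff_integrableOn_Ioo_of_le hcd.le]
  exact h1

open intervalIntegral MeasureTheory in
lemma realBeta_Ioo_integral {p q c d : ℝ} (hp : 0 < p) (hq : 0 < q) (hcd : c < d) :
    ∫ x in Ioo c d, (x - c) ^ (p-1) * (d - x) ^ (q-1) =
      (d-c) ^ (p+q-1) * (Real.Gamma p * Real.Gamma q / Real.Gamma (p+q)) := by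
  have hfun : (fun x : ℝ => ((x - c) ^ (p-1) * ((d - c) - (x - c)) ^ (q-1)))
      = (fun x : ℝ => (x - c) ^ (p-1) * (d - x) ^ (q-1)) := by
    funext x; ring_nf
  rw [← MeasureTheory.integral_Ioc_eq_integral_Ioo,
    ← intervalIntegral.integral_of_le hcd.le]
  have h2 := intervalIntegral.integral_comp_sub_right
    (a := c) (b := d) (fun y => y ^ (p-1) * ((d - c) - y) ^ (q-1)) c
  simp only [sub_self] at h2
  calc ∫ x in c..d, (x - c) ^ (p-1) * (d - x) ^ (q-1)
      = ∫ x in c..d, (x - c) ^ (p-1) * ((d - c) - (x - c)) ^ (q-1) := by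
        apply intervalIntegral.integral_congr
        intro x _; dsimp only; ring_nf
    _ = ∫ y in (0:ℝ)..(d - c), y ^ (p-1) * ((d - c) - y) ^ (q-1) := h2
    _ = (d-c) ^ (p+q-1) * (Real.Gamma p * Real.Gamma q / Real.Gamma (p+q)) :=
        realBeta_scaled hp hq (by linarith)

open MeasureTheory intervalIntegral in
theorem caputo_right_mittagLeffler (a b α lam : ℝ) (ψ : ℝ → ℝ) (hab : a < b)
    (hψ : ContDiffOn ℝ 1 ψ (Set.Icc a b))
    (hmono : StrictMonoOn ψ (Set.Icc a b))
    (hψ' : ∀ t ∈ Set.Icc a b, deriv ψ t ≠ 0)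
    (hα : α ∈ Set.Ioo (0 : ℝ) 1) :
    ∀ t ∈ Set.Ico a b,
      psiCaputoRight b α ψ (fun s => mittagLeffler α (lam * (ψ b - ψ s) ^ α)) t =
        lam * mittagLeffler α (lam * (ψ b - ψ t) ^ α) := by
  obtain ⟨hα0, hα1⟩ := hα
  intro t ht
  obtain ⟨hat, htb⟩ := ht
  have htIcc : t ∈ Icc a b := ⟨hat, htb.le⟩
  have hbIcc : b ∈ Icc a b := ⟨hab.le, le_rfl⟩
  have hψtb : ψ t < ψ b := hmono htIcc hbIcc htb
  set Δ : ℝ := ψ b - ψ t with hΔdef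
  have hΔ : 0 < Δ := by simp [hΔdef]; linarith
  set x : ℝ → ℝ := fun s => mittagLeffler α (lam * (ψ b - ψ s) ^ α) with hxdef
  -- differentiability of ψ on the interior
  have hdiff : ∀ τ ∈ Ioo a b, HasDerivAt ψ (deriv ψ τ) τ := by
    intro τ hτ
    exact ((hψ.differentiableOn one_ne_zero).differentiableAt
      (Icc_mem_nhds hτ.1 hτ.2)).hasDerivAt
  have hderiv_pos : ∀ τ ∈ Ioo a b, 0 < deriv ψ τ := by
    intro τ hτ
    have hnonneg : 0 ≤ deriv ψ τ := by
      have hT := hasDerivAt_iff_tendsto_slope.mp (hdiff τ hτ)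
      have hsub : Ioi τ ⊆ {τ}ᶜ := fun y hy => hy.ne'
      have hT' : Filter.Tendsto (slope ψ τ) (nhdsWithin τ (Ioi τ)) (nhds (deriv ψ τ)) :=
        hT.mono_left (nhdsWithin_mono τ hsub)
      apply ge_of_tendsto hT'
      filter_upwards [Ioo_mem_nhdsGT_of_mem (⟨le_refl τ, hτ.2⟩ : τ ∈ Ico τ b)] with y hy
      have hyIcc : y ∈ Icc a b := ⟨hτ.1.le.trans hy.1.le, hy.2.le⟩
      have hτIcc : τ ∈ Icc a b := ⟨hτ.1.le, hτ.2.le⟩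
      rw [slope_def_field]
      apply div_nonneg _ (by linarith [hy.1] : (0:ℝ) ≤ y - τ)
      have := hmono hτIcc hyIcc hy.1
      linarith
    exact lt_of_le_of_ne hnonneg (Ne.symm (hψ' τ ⟨hτ.1.le, hτ.2.le⟩))
  have hsubIoo : Ioo t b ⊆ Ioo a b := fun τ hτ => ⟨lt_of_le_of_lt hat hτ.1, hτ.2⟩
  -- the series F
  set F : ℕ → ℝ → ℝ := fun k τ =>
    (lam ^ (k+1) / Real.Gamma (α * (k+1))) *
      ((ψ τ - ψ t) ^ (-α) * ((ψ b - ψ τ) ^ (α * (k+1) - 1) * deriv ψ τ)) with hFdef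
  -- pointwise identity
  have hpt : ∀ τ ∈ Ioo t b,
      (ψ τ - ψ t) ^ (-α) * deriv x τ = -∑' k : ℕ, F k τ := by
    intro τ hτ
    have hτab : τ ∈ Ioo a b := hsubIoo hτ
    have hτIcc : τ ∈ Icc a b := ⟨hτab.1.le, hτab.2.le⟩
    set u : ℝ := ψ b - ψ τ with hudef
    have hu : 0 < u := by
      have := hmono hτIcc hbIcc hτab.2
      simp [hudef]; linarith
    set du : ℝ := deriv ψ τ with hdudef
    set w : ℝ := lam * u ^ α with hwdef
    -- derivative of x at τ
    have hinner : HasDerivAt (fun s => lam * (ψ b - ψ s) ^ α)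
        (lam * ((0 - du) * α * u ^ (α - 1))) τ := by
      exact (((hasDerivAt_const τ (ψ b)).sub (hdiff τ hτab)).rpow_const
        (Or.inl hu.ne')).const_mul lam
    have hcomp : HasDerivAt x
        ((∑' k : ℕ, (k : ℝ) * w ^ (k - 1) / Real.Gamma (α * k + 1)) *
          (lam * ((0 - du) * α * u ^ (α - 1)))) τ :=
      by have := (ML_hasDerivAt hα0 w).comp τ hinner; exact this
    rw [hcomp.deriv]
    -- shift the series
    have hshift : (∑' k : ℕ, (k : ℝ) * w ^ (k - 1) / Real.Gamma (α * k + 1)) =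
        ∑' k : ℕ, ((k : ℝ) + 1) * w ^ k / Real.Gamma (α * (k+1) + 1) := by
      rw [Summable.tsum_eq_zero_add (deriv_series_summable hα0 w)]
      push_cast
      simp
    rw [hshift]
    set p : ℝ := (ψ τ - ψ t) ^ (-α) with hpdef
    set c : ℝ := lam * ((0 - du) * α * u ^ (α - 1)) with hcdef
    rw [show p * ((∑' k : ℕ, ((k:ℝ)+1) * w ^ k / Real.Gamma (α*(k+1)+1)) * c)
        = ∑' k : ℕ, (((k:ℝ)+1) * w ^ k / Real.Gamma (α*(k+1)+1)) * (p * c) from by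
      rw [tsum_mul_right]; ring]
    rw [← tsum_neg]
    apply tsum_congr
    intro k
    -- per-term identity
    have hGk : Real.Gamma (α * (k+1) + 1) = (α * (k+1)) * Real.Gamma (α * (k+1)) :=
      Real.Gamma_add_one (by positivity)
    have hGpos : 0 < Real.Gamma (α * (k+1)) := Real.Gamma_pos_of_pos (by positivity)
    have hne1 : (α * ((k:ℝ)+1)) ≠ 0 := by positivity
    have hw : w ^ k = lam ^ k * u ^ (α * k) := by
      rw [hwdef, mul_pow, ← Real.rpow_natCast (u ^ α) k, ← Real.rpow_mul hu.le]
    have huu : u ^ (α - 1) * u ^ (α * k) = u ^ (α * (k+1) - 1) := by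
      rw [← Real.rpow_add hu]
      congr 1
      push_cast
      ring
    rw [hFdef]
    dsimp only
    rw [hw, hGk, ← huu, hcdef]
    push_cast
    field_simp
    ring
  -- change of variables infrastructure
  have hG1α : 0 < Real.Gamma (1 - α) := Real.Gamma_pos_of_pos (by linarith)
  have hderivW : ∀ τ ∈ Ioo t b, HasDerivWithinAt ψ (deriv ψ τ) (Ioo t b) τ :=
    fun τ hτ => (hdiff τ (hsubIoo hτ)).hasDerivWithinAt
  have hIccsub : Ioo t b ⊆ Icc a b := fun τ hτ => ⟨hat.trans hτ.1.le, hτ.2.le⟩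
  have hinj : InjOn ψ (Ioo t b) := hmono.injOn.mono hIccsub
  have himg : ψ '' Ioo t b = Ioo (ψ t) (ψ b) := by
    apply Subset.antisymm
    · rintro v ⟨τ, hτ, rfl⟩
      exact ⟨hmono htIcc (hIccsub hτ) hτ.1, hmono (hIccsub hτ) hbIcc hτ.2⟩
    · have hcont : ContinuousOn ψ (Icc t b) :=
        hψ.continuousOn.mono (fun y hy => ⟨hat.trans hy.1, hy.2⟩)
      exact intermediate_value_Ioo htb.le hcont
  set g : ℕ → ℝ → ℝ :=
    fun k v => (v - ψ t) ^ (-α) * (ψ b - v) ^ (α * ((k:ℝ)+1) - 1) with hgdef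
  have hexp : (1:ℝ) - α - 1 = -α := by ring
  have hgInt : ∀ k : ℕ, IntegrableOn (g k) (Ioo (ψ t) (ψ b)) volume := by
    intro k
    have h := realBeta_Ioo_integrable (p := 1-α) (q := α*((k:ℝ)+1))
      (by linarith) (by positivity) hψtb
    simpa [hexp] using h
  have hchg : ∀ k : ℕ, ∫ v in Ioo (ψ t) (ψ b), g k v
      = ∫ τ in Ioo t b, |deriv ψ τ| • g k (ψ τ) := by
    intro k
    rw [← himg]
    exact integral_image_eq_integral_abs_deriv_smul measurableSet_Ioo hderivW hinj (g k)
  have hGβpos : ∀ k : ℕ, 0 < Real.Gamma (α * ((k:ℝ)+1)) :=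
    fun k => Real.Gamma_pos_of_pos (by positivity)
  have hGk1pos : ∀ k : ℕ, 0 < Real.Gamma (α * (k:ℝ) + 1) :=
    fun k => Real.Gamma_pos_of_pos (by positivity)
  have hFeq : ∀ k : ℕ, EqOn
      (fun τ => (lam^(k+1) / Real.Gamma (α * ((k:ℝ)+1))) * (|deriv ψ τ| • g k (ψ τ)))
      (F k) (Ioo t b) := by
    intro k τ hτ
    have hd := hderiv_pos τ (hsubIoo hτ)
    simp only [hgdef, hFdef, smul_eq_mul, abs_of_pos hd]
    ring
  have hFInt : ∀ k : ℕ, Integrable (F k) (volume.restrict (Ioo t b)) := by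
    intro k
    have h1 : IntegrableOn (fun τ => |deriv ψ τ| • g k (ψ τ)) (Ioo t b) volume := by
      apply (integrableOn_image_iff_integrableOn_abs_deriv_smul
        measurableSet_Ioo hderivW hinj (g k)).mp
      rw [himg]; exact hgInt k
    exact IntegrableOn.congr_fun
      (Integrable.const_mul h1 (lam^(k+1) / Real.Gamma (α * ((k:ℝ)+1))) :
        IntegrableOn _ (Ioo t b) volume) (hFeq k) measurableSet_Ioo
  have hbeta : ∀ k : ℕ, ∫ v in Ioo (ψ t) (ψ b), g k v
      = Δ ^ (α*(k:ℝ)) * (Real.Gamma (1-α) * Real.Gamma (α*((k:ℝ)+1))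
          / Real.Gamma (α*(k:ℝ)+1)) := by
    intro k
    have h := realBeta_Ioo_integral (p := 1-α) (q := α*((k:ℝ)+1))
      (by linarith) (by positivity) hψtb
    simp only [hexp] at h
    rw [show (1:ℝ) - α + α*((k:ℝ)+1) - 1 = α*(k:ℝ) from by ring,
      show (1:ℝ) - α + α*((k:ℝ)+1) = α*(k:ℝ)+1 from by ring] at h
    rw [← hΔdef] at h
    exact h
  have hpow : ∀ k : ℕ, ∀ l : ℝ, (l * Δ ^ α) ^ k = l ^ k * Δ ^ (α*(k:ℝ)) := by
    intro k l
    rw [mul_pow, ← Real.rpow_natCast (Δ ^ α) k, ← Real.rpow_mul hΔ.le]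
  have hFval : ∀ k : ℕ, ∫ τ in Ioo t b, F k τ
      = Real.Gamma (1-α) * (lam * ((lam * Δ^α)^k / Real.Gamma (α*(k:ℝ)+1))) := by
    intro k
    calc ∫ τ in Ioo t b, F k τ
        = ∫ τ in Ioo t b,
            (lam^(k+1) / Real.Gamma (α * ((k:ℝ)+1))) * (|deriv ψ τ| • g k (ψ τ)) :=
          (setIntegral_congr_fun measurableSet_Ioo (hFeq k)).symm
      _ = (lam^(k+1) / Real.Gamma (α * ((k:ℝ)+1)))
            * ∫ τ in Ioo t b, |deriv ψ τ| • g k (ψ τ) := integral_const_mul _ _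
      _ = (lam^(k+1) / Real.Gamma (α * ((k:ℝ)+1)))
            * ∫ v in Ioo (ψ t) (ψ b), g k v := by rw [hchg k]
      _ = Real.Gamma (1-α) * (lam * ((lam * Δ^α)^k / Real.Gamma (α*(k:ℝ)+1))) := by
          rw [hbeta k, hpow k lam]
          field_simp [(hGβpos k).ne', (hGk1pos k).ne']
          ring
  have hnormeq : ∀ k : ℕ, EqOn (fun τ => ‖F k τ‖)
      (fun τ => (|lam|^(k+1) / Real.Gamma (α * ((k:ℝ)+1))) * (|deriv ψ τ| • g k (ψ τ)))
      (Ioo t b) := by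
    intro k τ hτ
    have hd := hderiv_pos τ (hsubIoo hτ)
    have hτab := hsubIoo hτ
    have h1 : 0 < ψ τ - ψ t := by
      have := hmono htIcc (hIccsub hτ) hτ.1; linarith
    have h2 : 0 < ψ b - ψ τ := by
      have := hmono (hIccsub hτ) hbIcc hτ.2; linarith
    simp only [hgdef, hFdef, smul_eq_mul, Real.norm_eq_abs]
    rw [abs_mul, abs_div, abs_mul, abs_mul, abs_pow, abs_of_pos (hGβpos k),
      abs_of_pos hd, abs_of_pos (Real.rpow_pos_of_pos h1 _),
      abs_of_pos (Real.rpow_pos_of_pos h2 _)]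
    ring
  have hnorm : ∀ k : ℕ, ∫ τ in Ioo t b, ‖F k τ‖
      = Real.Gamma (1-α) * (|lam| * ((|lam| * Δ^α)^k / Real.Gamma (α*(k:ℝ)+1))) := by
    intro k
    calc ∫ τ in Ioo t b, ‖F k τ‖
        = ∫ τ in Ioo t b,
            (|lam|^(k+1) / Real.Gamma (α * ((k:ℝ)+1))) * (|deriv ψ τ| • g k (ψ τ)) :=
          setIntegral_congr_fun measurableSet_Ioo (hnormeq k)
      _ = (|lam|^(k+1) / Real.Gamma (α * ((k:ℝ)+1)))
            * ∫ v in Ioo (ψ t) (ψ b), g k v := by rw [MeasureTheory.integral_const_mul, hchg k]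
      _ = Real.Gamma (1-α) * (|lam| * ((|lam| * Δ^α)^k / Real.Gamma (α*(k:ℝ)+1))) := by
          rw [hbeta k, hpow k |lam|]
          field_simp [(hGβpos k).ne', (hGk1pos k).ne']
          ring
  have hsum : Summable (fun k : ℕ => ∫ τ in Ioo t b, ‖F k τ‖) := by
    apply Summable.congr _ (fun k => (hnorm k).symm)
    exact (((gamma_summable hα0 1 (|lam| * Δ^α)).mul_left |lam|).mul_left
      (Real.Gamma (1-α)))
  -- main computation
  have hIcalc : (∫ τ in t..b, (ψ τ - ψ t) ^ (-α) * deriv x τ)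
      = -(Real.Gamma (1-α) * (lam * mittagLeffler α (lam * Δ^α))) := by
    rw [intervalIntegral.integral_of_le htb.le, MeasureTheory.integral_Ioc_eq_integral_Ioo,
      setIntegral_congr_fun measurableSet_Ioo hpt, MeasureTheory.integral_neg,
      ← integral_tsum_of_summable_integral_norm hFInt hsum, tsum_congr hFval,
      tsum_mul_left, tsum_mul_left]
    rfl
  show -(1 / Real.Gamma (1 - α)) * (∫ τ in t..b, (ψ τ - ψ t) ^ (-α) * deriv x τ)
      = lam * mittagLeffler α (lam * Δ ^ α)
  rw [hIcalc]
  field_simp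
end
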